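/- Let 0<q<1, r ≥ 0, ε ∈ {+,−}, λ_ε = 1/2 + ε·√(r+1/4), and c(n) := (r + λ_ε q^{2n} − λ_ε² q^{4n})^{1/2} for n ∈ ℕ (these are nonnegative reals). On ℓ²(ℕ) with orthonormal basis (eₙ)_{n≥0}, define bounded operators A eₙ = λ_ε q^{2n} eₙ and B eₙ = c(n) e_{n−1} (with e_{−1} := 0). Then: B* eₙ = c(n+1) e_{n+1}, A·B = q⁻²·B·A, B*·B = A − A² + r·1, and B·B* = q²·A − q⁴·A² + r·1. -/

import Mathlib

private lemma aux_hasSum_smul_single (f : lp (fun _ : ℕ => ℂ) 2) :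
    HasSum (fun n => f n • lp.single 2 n (1:ℂ)) f := by
  have h := lp.hasSum_single (E := fun _ : ℕ => ℂ) (p := 2) (by norm_num) f
  convert h using 2 with n
  rw [← lp.single_smul]
  simp

private lemma aux_ext_single (T S : lp (fun _ : ℕ => ℂ) 2 →L[ℂ] lp (fun _ : ℕ => ℂ) 2)
    (h : ∀ n, T (lp.single 2 n 1) = S (lp.single 2 n 1)) : T = S := by
  ext f
  have h1 := aux_hasSum_smul_single f
  have hT : HasSum (fun n => f n • T (lp.single 2 n 1)) (T f) := by
    simpa using h1.mapL T
  have hS : HasSum (fun n => f n • S (lp.single 2 n 1)) (S f) := by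
    simpa using h1.mapL S
  simp only [h] at hT
  exact congrFun (congrArg _ (hT.unique hS)) _

private lemma aux_coord (v : lp (fun _ : ℕ => ℂ) 2) (m : ℕ) :
    v m = inner (𝕜 := ℂ) (lp.single 2 m (1:ℂ)) v := by
  rw [lp.inner_single_left]
  simp

theorem stmt_19 (q r : ℝ) (hq : 0 < q) (hq1 : q < 1) (hr : 0 ≤ r)
    (l : ℝ) (hl : l = 1/2 + Real.sqrt (r + 1/4) ∨ l = 1/2 - Real.sqrt (r + 1/4))
    (hc : ∀ n : ℕ, 0 ≤ r + l * q ^ (2 * n) - (l * q ^ (2 * n)) ^ 2)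
    (A B : lp (fun _ : ℕ => ℂ) 2 →L[ℂ] lp (fun _ : ℕ => ℂ) 2)
    (hA : ∀ n : ℕ, A (lp.single 2 n 1) = ((l * q ^ (2 * n) : ℝ) : ℂ) • lp.single 2 n 1)
    (hB0 : B (lp.single 2 0 1) = 0)
    (hB : ∀ n : ℕ, B (lp.single 2 (n + 1) 1)
        = ((Real.sqrt (r + l * q ^ (2 * (n + 1)) - (l * q ^ (2 * (n + 1))) ^ 2) : ℝ) : ℂ)
            • lp.single 2 n 1) :
    (∀ n : ℕ, ContinuousLinearMap.adjoint B (lp.single 2 n 1)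
        = ((Real.sqrt (r + l * q ^ (2 * (n + 1)) - (l * q ^ (2 * (n + 1))) ^ 2) : ℝ) : ℂ)
            • lp.single 2 (n + 1) 1) ∧
    A * B = (((q : ℝ) ^ 2)⁻¹ : ℂ) • (B * A) ∧
    ContinuousLinearMap.adjoint B * B = A - A ^ 2 + (r : ℂ) • 1 ∧
    B * ContinuousLinearMap.adjoint B
      = ((q : ℂ) ^ 2) • A - ((q : ℂ) ^ 4) • A ^ 2 + (r : ℂ) • 1 := by
  have hl2 : l ^ 2 - l = r := by
    have h14 : (0:ℝ) ≤ r + 1/4 := by linarith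
    have hs := Real.sq_sqrt h14
    rcases hl with h | h <;> subst h <;> nlinarith [hs]
  -- the adjoint formula
  have hadj : ∀ n : ℕ, ContinuousLinearMap.adjoint B (lp.single 2 n 1)
      = ((Real.sqrt (r + l * q ^ (2 * (n + 1)) - (l * q ^ (2 * (n + 1))) ^ 2) : ℝ) : ℂ)
          • lp.single 2 (n + 1) 1 := by
    intro n
    apply lp.ext
    funext m
    have : (ContinuousLinearMap.adjoint B (lp.single 2 n 1) : ∀ _ : ℕ, ℂ) m
        = inner (𝕜 := ℂ) (B (lp.single 2 m 1)) (lp.single 2 n (1:ℂ)) := by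
      rw [aux_coord, ContinuousLinearMap.adjoint_inner_right]
    rw [this]
    cases m with
    | zero =>
      rw [hB0, inner_zero_left]
      simp only [lp.coeFn_smul, Pi.smul_apply, lp.single_apply]
      simp
    | succ k =>
      rw [hB k]
      rw [inner_smul_left, lp.inner_single_left]
      simp only [lp.coeFn_smul, Pi.smul_apply, lp.single_apply, Complex.conj_ofReal,
        RCLike.inner_apply, map_one, one_mul, smul_eq_mul]
      by_cases hk : k = n
      · subst hk; simp
      · simp [hk, fun h => hk (Nat.succ_injective h)]
  refine ⟨hadj, ?_, ?_, ?_⟩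
  · -- A B = q⁻² B A
    apply aux_ext_single
    intro n
    cases n with
    | zero =>
      simp only [ContinuousLinearMap.mul_apply, ContinuousLinearMap.smul_apply, hB0, map_zero,
        hA 0, map_smul, hB0, smul_zero]
    | succ k =>
      simp only [ContinuousLinearMap.mul_apply, ContinuousLinearMap.smul_apply, hB k, map_smul,
        hA k, hA (k+1), hB k, smul_smul]
      congr 1
      have hq0 : q ^ 2 ≠ 0 := pow_ne_zero _ hq.ne'
      have key : Real.sqrt (r + l * q ^ (2 * (k + 1)) - (l * q ^ (2 * (k + 1))) ^ 2)
            * (l * q ^ (2 * k))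
          = (q ^ 2)⁻¹ * (l * q ^ (2 * (k + 1))
            * Real.sqrt (r + l * q ^ (2 * (k + 1)) - (l * q ^ (2 * (k + 1))) ^ 2)) := by
        rw [show 2 * (k + 1) = 2 * k + 2 by ring, pow_add]
        field_simp
      exact_mod_cast congrArg (fun x : ℝ => (x : ℂ)) key
  · -- B* B = A - A² + r
    apply aux_ext_single
    intro n
    cases n with
    | zero =>
      simp only [ContinuousLinearMap.mul_apply, hB0, map_zero,
        ContinuousLinearMap.add_apply, ContinuousLinearMap.sub_apply,
        ContinuousLinearMap.smul_apply, ContinuousLinearMap.one_apply, pow_two,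
        hA 0, map_smul, smul_smul]
      rw [← sub_smul, ← add_smul]
      have key : ((l * q ^ (2 * 0) : ℝ) : ℂ)
          - ((l * q ^ (2 * 0) : ℝ) : ℂ) * ((l * q ^ (2 * 0) : ℝ) : ℂ) + (r : ℂ) = 0 := by
        have : l * q ^ (2 * 0) = l := by norm_num
        rw [this]
        have hr0 : l - l * l + r = 0 := by nlinarith [hl2]
        exact_mod_cast congrArg (fun x : ℝ => (x : ℂ)) hr0
      rw [key, zero_smul]
    | succ k =>
      simp only [ContinuousLinearMap.mul_apply, hB k, map_smul, hadj k, smul_smul,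
        ContinuousLinearMap.add_apply, ContinuousLinearMap.sub_apply,
        ContinuousLinearMap.smul_apply, ContinuousLinearMap.one_apply, pow_two,
        hA (k+1)]
      rw [← sub_smul, ← add_smul]
      congr 1
      have hcc := hc (k + 1)
      rw [pow_two] at hcc
      have key : Real.sqrt (r + l * q ^ (2 * (k + 1)) - l * q ^ (2 * (k + 1)) * (l * q ^ (2 * (k + 1))))
            * Real.sqrt (r + l * q ^ (2 * (k + 1)) - l * q ^ (2 * (k + 1)) * (l * q ^ (2 * (k + 1))))
          = l * q ^ (2 * (k + 1)) - l * q ^ (2 * (k + 1)) * (l * q ^ (2 * (k + 1))) + r := by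
        rw [Real.mul_self_sqrt hcc]
        ring
      exact_mod_cast congrArg (fun x : ℝ => (x : ℂ)) key
  · -- B B* = q² A - q⁴ A² + r
    apply aux_ext_single
    intro n
    simp only [ContinuousLinearMap.mul_apply, hadj n, map_smul, hB n, smul_smul,
      ContinuousLinearMap.add_apply, ContinuousLinearMap.sub_apply,
      ContinuousLinearMap.smul_apply, ContinuousLinearMap.one_apply, pow_two,
      hA n]
    rw [← sub_smul, ← add_smul]
    congr 1
    have hcc := hc (n + 1)
    rw [pow_two] at hcc
    have key : Real.sqrt (r + l * q ^ (2 * (n + 1)) - l * q ^ (2 * (n + 1)) * (l * q ^ (2 * (n + 1))))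
          * Real.sqrt (r + l * q ^ (2 * (n + 1)) - l * q ^ (2 * (n + 1)) * (l * q ^ (2 * (n + 1))))
        = q * q * (l * q ^ (2 * n)) - q ^ 4 * (l * q ^ (2 * n) * (l * q ^ (2 * n))) + r := by
      rw [Real.mul_self_sqrt hcc, show 2 * (n + 1) = 2 * n + 2 by ring, pow_add]
      ring
    exact_mod_cast congrArg (fun x : ℝ => (x : ℂ)) key
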